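/- The image of S_{𝔯_II} under φ equals S_𝔼, i.e., φ(S_{𝔯_II}) = S_𝔼. In particular, for every (w₁, w₂, w₃) ∈ ℂ³ with w₁ = conj(w₂) w₃, |w₃| = 1 and |w₂| ≤ 1, there exists c ∈ ℂ such that the matrix [[w₁, c],[c, w₂]] is unitary and w₁w₂ − c² = w₃. -/

import Mathlib

/-- The Shilov boundary `S_𝔼` of the tetrablock. -/
def shilovTetrablock : Set (ℂ × ℂ × ℂ) :=
  {z | z.1 = (starRingEnd ℂ) z.2.1 * z.2.2 ∧ ‖z.2.2‖ = 1 ∧ ‖z.2.1‖ ≤ 1}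

/-- The Shilov boundary `S_{𝔯_II}` of the 3-dimensional type-II Cartan domain: symmetric
2×2 unitary matrices, parametrized by their entries. -/
def shilovCartanII : Set (ℂ × ℂ × ℂ) :=
  {z | !![z.1, z.2.2; z.2.2, z.2.1] ∈ Matrix.unitaryGroup (Fin 2) ℂ}

/-- The proper map `φ(z₁, z₂, z₃) = (z₁, z₂, z₁ z₂ − z₃²)`. -/
def phiMap : ℂ × ℂ × ℂ → ℂ × ℂ × ℂ :=
  fun z => (z.1, z.2.1, z.1 * z.2.1 - z.2.2 ^ 2)

local notation "conj" => starRingEnd ℂ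

/-- Characterization of symmetric 2×2 unitary matrices by entrywise equations. -/
lemma phiAux_unit_iff (a b c : ℂ) : !![a, c; c, b] ∈ Matrix.unitaryGroup (Fin 2) ℂ ↔
    (a * conj a + c * conj c = 1 ∧ a * conj c + c * conj b = 0 ∧
     c * conj a + b * conj c = 0 ∧ c * conj c + b * conj b = 1) := by
  rw [Matrix.mem_unitaryGroup_iff, ← Matrix.ext_iff]
  simp only [Matrix.mul_apply, Fin.sum_univ_two, Matrix.one_apply, Fin.forall_fin_two,
    Matrix.star_apply, Matrix.conjTranspose_apply]
  simp [and_assoc]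

/-- Forward direction: entries of a symmetric unitary give a point of the tetrablock boundary. -/
lemma phiAux_fwd (a b c : ℂ)
    (e1 : a * conj a + c * conj c = 1) (e2 : a * conj c + c * conj b = 0)
    (e3 : c * conj a + b * conj c = 0) (e4 : c * conj c + b * conj b = 1) :
    a = conj b * (a * b - c ^ 2) ∧ ‖a * b - c ^ 2‖ = 1 ∧ ‖b‖ ≤ 1 := by
  refine ⟨by linear_combination c * e2 - a * e4, ?_, ?_⟩
  · have hd : (a * b - c ^ 2) * conj (a * b - c ^ 2) = 1 := by
      simp only [map_sub, map_mul, map_pow]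
      linear_combination (1 + c * conj c) * e1 + a * conj a * e4 - a * conj c * e3
        - conj a * c * e2
    have : Complex.normSq (a * b - c ^ 2) = 1 := by
      have := hd
      rw [Complex.mul_conj] at this
      exact_mod_cast this
    rw [← Complex.sq_norm] at this
    nlinarith [norm_nonneg (a * b - c ^ 2)]
  · have hb : Complex.normSq c + Complex.normSq b = 1 := by
      have : ((Complex.normSq c : ℂ)) + ((Complex.normSq b : ℂ)) = 1 := by
        rw [← Complex.mul_conj, ← Complex.mul_conj]; exact e4
      exact_mod_cast this
    have h2 : ‖b‖ ^ 2 ≤ 1 := by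
      rw [Complex.sq_norm]; nlinarith [Complex.normSq_nonneg c]
    nlinarith [norm_nonneg b]

/-- Backward direction: existence of the off-diagonal entry `c`. -/
lemma phiAux_exists_c (w₁ w₂ w₃ : ℂ) (h1 : w₁ = conj w₂ * w₃) (h3 : ‖w₃‖ = 1)
    (h2 : ‖w₂‖ ≤ 1) :
    ∃ c : ℂ, !![w₁, c; c, w₂] ∈ Matrix.unitaryGroup (Fin 2) ℂ ∧ w₁ * w₂ - c ^ 2 = w₃ := by
  obtain ⟨c, hc⟩ := IsAlgClosed.exists_pow_nat_eq (((Complex.normSq w₂ : ℂ) - 1) * w₃) zero_lt_two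
  have hw3 : w₃ * conj w₃ = 1 := by
    rw [Complex.mul_conj]
    norm_cast
    rw [← Complex.sq_norm, h3]; norm_num
  have hw2 : Complex.normSq w₂ ≤ 1 := by
    rw [← Complex.sq_norm]; nlinarith [norm_nonneg w₂]
  have hb : w₂ * conj w₂ = (Complex.normSq w₂ : ℂ) := Complex.mul_conj w₂
  have hn : Complex.normSq c = 1 - Complex.normSq w₂ := by
    have e : (Complex.normSq c) ^ 2 = (1 - Complex.normSq w₂) ^ 2 := by
      rw [← map_pow Complex.normSq, hc, Complex.normSq_mul]
      have : ((Complex.normSq w₂ : ℂ) - 1) = ((Complex.normSq w₂ - 1 : ℝ) : ℂ) := by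
        push_cast; ring
      rw [this, Complex.normSq_ofReal, ← Complex.sq_norm w₃, h3]
      ring
    have h0 : (0:ℝ) ≤ Complex.normSq c := Complex.normSq_nonneg c
    nlinarith [e, h0, hw2]
  have hcc : c * conj c = 1 - (Complex.normSq w₂ : ℂ) := by
    rw [Complex.mul_conj, hn]; push_cast; ring
  have hdet : w₁ * w₂ - c ^ 2 = w₃ := by
    rw [h1]
    linear_combination w₃ * hb - hc
  refine ⟨c, (phiAux_unit_iff w₁ w₂ c).2 ⟨?_, ?_, ?_, ?_⟩, hdet⟩
  · rw [h1]
    have : conj (conj w₂ * w₃) = w₂ * conj w₃ := by rw [map_mul, Complex.conj_conj]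
    rw [this]
    linear_combination (Complex.normSq w₂ : ℂ) * hw3 + (w₃ * conj w₃) * hb + hcc
  · by_cases hc0 : c = 0
    · simp [hc0]
    · have hkey : c * (w₁ * conj c + c * conj w₂) = 0 := by
        rw [h1]
        linear_combination conj w₂ * w₃ * hcc + conj w₂ * hc
      exact (mul_eq_zero.mp hkey).resolve_left hc0
  · by_cases hc0 : c = 0
    · simp [hc0]
    · have hkey : c * (w₁ * conj c + c * conj w₂) = 0 := by
        rw [h1]
        linear_combination conj w₂ * w₃ * hcc + conj w₂ * hc
      have h0 : w₁ * conj c + c * conj w₂ = 0 := (mul_eq_zero.mp hkey).resolve_left hc0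
      have := congrArg conj h0
      simp only [map_add, map_mul, Complex.conj_conj, map_zero] at this
      linear_combination this
  · rw [hcc, hb]; ring

theorem phi_image_shilov :
    phiMap '' shilovCartanII = shilovTetrablock ∧
      ∀ w₁ w₂ w₃ : ℂ, w₁ = (starRingEnd ℂ) w₂ * w₃ → ‖w₃‖ = 1 →
        ‖w₂‖ ≤ 1 →
        ∃ c : ℂ, !![w₁, c; c, w₂] ∈ Matrix.unitaryGroup (Fin 2) ℂ ∧ w₁ * w₂ - c ^ 2 = w₃ := by
  refine ⟨?_, phiAux_exists_c⟩
  ext ⟨a, b, d⟩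
  constructor
  · rintro ⟨⟨x, y, z⟩, hm, heq⟩
    rw [shilovCartanII, Set.mem_setOf_eq, phiAux_unit_iff] at hm
    obtain ⟨e1, e2, e3, e4⟩ := hm
    obtain ⟨f1, f2, f3⟩ := phiAux_fwd x y z e1 e2 e3 e4
    simp only [phiMap, Prod.mk.injEq] at heq
    obtain ⟨h1, h2, h3⟩ := heq
    subst h1 h2 h3
    exact ⟨f1, f2, f3⟩
  · rintro ⟨h1, h3, h2⟩
    obtain ⟨c, hu, hd⟩ := phiAux_exists_c a b d h1 h3 h2
    exact ⟨(a, b, c), hu, by simp [phiMap, hd]⟩
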